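/- In an m × n grid graph, for any two vertices u and v, the two-point locus Π({u,v}) equals the vertex set of the subgrid (axis-aligned rectangle) having u and v as opposite corners, i.e., {(x,y) : min(u₁,v₁) ≤ x ≤ max(u₁,v₁), min(u₂,v₂) ≤ y ≤ max(u₂,v₂)}, which is exactly the set of vertices lying on some shortest u–v path. -/

import Mathlib

/-- Manhattan (shortest-path) distance on the m × n grid graph. -/
def gridDist {m n : ℕ} (u v : Fin m × Fin n) : ℕ :=
  ((u.1 : ℤ) - (v.1 : ℤ)).natAbs + ((u.2 : ℤ) - (v.2 : ℤ)).natAbs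

lemma key (t D a b : ℝ) (ht : 0 ≤ t) (htD : t ≤ D) (ha : 0 ≤ a) (hb : 0 ≤ b) (hab : D ≤ a + b) :
    (D - t) * t ^ 2 + t * (D - t) ^ 2 ≤ (D - t) * a ^ 2 + t * b ^ 2 := by
  rcases le_or_gt a D with h | h
  · have hba : D - a ≤ b := by linarith
    have hDa : 0 ≤ D - a := by linarith
    have h1 : t * (D - a) ^ 2 ≤ t * b ^ 2 :=
      mul_le_mul_of_nonneg_left (by nlinarith [mul_le_mul hba hba hDa hb]) ht
    nlinarith [sq_nonneg (a - t)]
  · have h1 : (D - t) * D ^ 2 ≤ (D - t) * a ^ 2 :=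
      mul_le_mul_of_nonneg_left (by nlinarith) (by linarith)
    nlinarith [mul_nonneg ht (sq_nonneg b)]

lemma convex_strict (w₁ w₂ A A' B B' : ℝ) (h1 : 0 ≤ w₁) (h2 : 0 ≤ w₂) (h12 : w₁ + w₂ = 1)
    (hA : A' < A) (hB : B' < B) : w₁ * A' + w₂ * B' < w₁ * A + w₂ * B := by
  rcases eq_or_lt_of_le h1 with hw | hw
  · have hw2 : w₂ = 1 := by linarith
    rw [← hw, hw2]; simpa
  · nlinarith [mul_le_mul_of_nonneg_left hB.le h2, mul_lt_mul_of_pos_left hA hw]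


set_option maxHeartbeats 1000000 in
/-- In a grid graph, the two-point locus `Π({u,v})` equals the axis-aligned
rectangle spanned by `u` and `v`, which is exactly the set of vertices on
shortest `u`–`v` paths. -/
theorem grid_two_point_locus_eq_rectangle
    (m n : ℕ) (u v : Fin m × Fin n) :
    ({z : Fin m × Fin n | ∃ w₁ w₂ : ℝ, 0 ≤ w₁ ∧ 0 ≤ w₂ ∧ w₁ + w₂ = 1 ∧
        ∀ y : Fin m × Fin n,
          w₁ * (gridDist z u : ℝ) ^ 2 + w₂ * (gridDist z v : ℝ) ^ 2
            ≤ w₁ * (gridDist y u : ℝ) ^ 2 + w₂ * (gridDist y v : ℝ) ^ 2}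
      = {z : Fin m × Fin n |
          min u.1.val v.1.val ≤ z.1.val ∧ z.1.val ≤ max u.1.val v.1.val ∧
          min u.2.val v.2.val ≤ z.2.val ∧ z.2.val ≤ max u.2.val v.2.val}) ∧
    ({z : Fin m × Fin n |
          min u.1.val v.1.val ≤ z.1.val ∧ z.1.val ≤ max u.1.val v.1.val ∧
          min u.2.val v.2.val ≤ z.2.val ∧ z.2.val ≤ max u.2.val v.2.val}
      = {z : Fin m × Fin n | gridDist u z + gridDist z v = gridDist u v}) := by
  constructor
  ·
    ext z
    simp only [Set.mem_setOf_eq]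
    constructor
    · rintro ⟨w₁, w₂, h1, h2, h12, hmin⟩
      by_contra hz
      have hm : u.1.val < m := u.1.isLt
      have hn : u.2.val < n := u.2.isLt
      obtain ⟨y, hu, hv⟩ : ∃ y : Fin m × Fin n,
          gridDist y u < gridDist z u ∧ gridDist y v < gridDist z v := by
        refine ⟨(⟨min (max z.1.val (min u.1.val v.1.val)) (max u.1.val v.1.val), by omega⟩,
          ⟨min (max z.2.val (min u.2.val v.2.val)) (max u.2.val v.2.val), by omega⟩), ?_, ?_⟩ <;>
          (simp only [gridDist]; omega)
      have hA : ((gridDist y u : ℝ)) ^ 2 < ((gridDist z u : ℝ)) ^ 2 := by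
        have h : (gridDist y u : ℝ) < gridDist z u := by exact_mod_cast hu
        nlinarith [Nat.cast_nonneg (α := ℝ) (gridDist y u)]
      have hB : ((gridDist y v : ℝ)) ^ 2 < ((gridDist z v : ℝ)) ^ 2 := by
        have h : (gridDist y v : ℝ) < gridDist z v := by exact_mod_cast hv
        nlinarith [Nat.cast_nonneg (α := ℝ) (gridDist y v)]
      exact absurd (hmin y) (not_le.mpr (convex_strict w₁ w₂ _ _ _ _ h1 h2 h12 hA hB))
    · intro hz
      have hsum : gridDist z u + gridDist z v = gridDist u v := by
        simp only [gridDist] at *; omega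
      rcases Nat.eq_zero_or_pos (gridDist z u) with ht0 | ht0
      · refine ⟨1, 0, zero_le_one, le_refl 0, by ring, fun y => ?_⟩
        rw [ht0]
        push_cast
        nlinarith [sq_nonneg ((gridDist y u : ℝ)), sq_nonneg ((gridDist y v : ℝ))]
      · set D : ℝ := (gridDist u v : ℝ) with hD
        set t : ℝ := (gridDist z u : ℝ) with ht
        have hDpos : 0 < D := by
          have h : 0 < gridDist u v := by omega
          rw [hD]; exact_mod_cast h
        have htnn : 0 ≤ t := Nat.cast_nonneg _
        have htD : t ≤ D := by
          have h : gridDist z u ≤ gridDist u v := by omega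
          rw [ht, hD]; exact_mod_cast h
        have hzv : (gridDist z v : ℝ) = D - t := by
          rw [hD, ht, ← hsum]; push_cast; ring
        refine ⟨(D - t) / D, t / D, div_nonneg (by linarith) hDpos.le, div_nonneg htnn hDpos.le, by field_simp; ring, fun y => ?_⟩
        have htri : D ≤ (gridDist y u : ℝ) + (gridDist y v : ℝ) := by
          have h : gridDist u v ≤ gridDist y u + gridDist y v := by
            simp only [gridDist]; omega
          rw [hD]; exact_mod_cast h
        have hkey := key t D (gridDist y u) (gridDist y v) htnn htD
          (Nat.cast_nonneg _) (Nat.cast_nonneg _) htri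
        rw [hzv, div_mul_eq_mul_div, div_mul_eq_mul_div, div_mul_eq_mul_div, div_mul_eq_mul_div,
          ← add_div, ← add_div]
        exact (div_le_div_iff_of_pos_right hDpos).mpr hkey
  · ext z
    simp only [Set.mem_setOf_eq, gridDist]
    omega
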